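/- Suppose smooth functions q, p, u, w, R, R₀ on (0,∞) satisfy: u' = -2q², w' = -2p², (1+s²)q' = -asq + (β₀-(2a-1)u)p + 2(1+s²)q²p/s, (1+s²)p' = asp - (γ₀+(2a+1)w)q - 2(1+s²)qp²/s, (1+s²)R = (γ₀+(2a+1)w)q² + (β₀-(2a-1)u)p² - 2asqp + 2s(1+s²)R₀², with R₀ = qp/s, and all of u, w, q, p, (1+s²)R tend to 0 as s → ∞. Then the integral of motion [γ₀+(2a+1)w][β₀-(2a-1)u] = β₀γ₀ - 2sσ - 4a(1+s²)qp holds, where σ := (1+s²)R. -/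

import Mathlib

open Filter Set

noncomputable def Ffun (a β₀ γ₀ : ℝ) (q p u w : ℝ → ℝ) (s : ℝ) : ℝ :=
  (γ₀ + (2*a+1)*w s) * (β₀ - (2*a-1)*u s) - β₀*γ₀
    + 2*s*((γ₀ + (2*a+1)*w s) * (q s)^2 + (β₀ - (2*a-1)*u s) * (p s)^2)
    + 4*a*(q s * p s) + 4*(1+s^2)*(q s * p s)^2

theorem Ffun_deriv (a β₀ γ₀ : ℝ) (q p u w : ℝ → ℝ)
    (hu : ∀ s ∈ Set.Ioi (0 : ℝ), HasDerivAt u (-2 * (q s) ^ 2) s)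
    (hw : ∀ s ∈ Set.Ioi (0 : ℝ), HasDerivAt w (-2 * (p s) ^ 2) s)
    (hq : ∀ s ∈ Set.Ioi (0 : ℝ), HasDerivAt q
      ((-(a * s) * q s + (β₀ - (2 * a - 1) * u s) * p s +
        2 * (1 + s ^ 2) * (q s) ^ 2 * p s / s) / (1 + s ^ 2)) s)
    (hp : ∀ s ∈ Set.Ioi (0 : ℝ), HasDerivAt p
      ((a * s * p s - (γ₀ + (2 * a + 1) * w s) * q s -
        2 * (1 + s ^ 2) * q s * (p s) ^ 2 / s) / (1 + s ^ 2)) s) :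
    ∀ s ∈ Set.Ioi (0 : ℝ), HasDerivAt (Ffun a β₀ γ₀ q p u w) 0 s := by
  intro s hs
  have hs0 : (0:ℝ) < s := hs
  have hsne : s ≠ 0 := ne_of_gt hs0
  have hs2 : (1 + s^2) ≠ 0 := by positivity
  have hW : HasDerivAt (fun t => γ₀ + (2*a+1)*w t) ((2*a+1)*(-2 * (p s)^2)) s :=
    by exact ((hw s hs).const_mul (2*a+1)).const_add γ₀
  have hU : HasDerivAt (fun t => β₀ - (2*a-1)*u t) (-((2*a-1)*(-2 * (q s)^2))) s :=
    by exact ((hu s hs).const_mul (2*a-1)).const_sub β₀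
  have hQ := hq s hs
  have hP := hp s hs
  have hQP : HasDerivAt (fun t => q t * p t)
      ((((-(a * s) * q s + (β₀ - (2 * a - 1) * u s) * p s +
        2 * (1 + s ^ 2) * (q s) ^ 2 * p s / s) / (1 + s ^ 2))) * p s +
        q s * ((a * s * p s - (γ₀ + (2 * a + 1) * w s) * q s -
        2 * (1 + s ^ 2) * q s * (p s) ^ 2 / s) / (1 + s ^ 2))) s := hQ.mul hP
  have hQ2 : HasDerivAt (fun t => (q t)^2)
      (2 * q s * ((-(a * s) * q s + (β₀ - (2 * a - 1) * u s) * p s +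
        2 * (1 + s ^ 2) * (q s) ^ 2 * p s / s) / (1 + s ^ 2))) s := by
    simpa [mul_comm, mul_assoc, mul_left_comm] using hQ.fun_pow 2
  have hP2 : HasDerivAt (fun t => (p t)^2)
      (2 * p s * ((a * s * p s - (γ₀ + (2 * a + 1) * w s) * q s -
        2 * (1 + s ^ 2) * q s * (p s) ^ 2 / s) / (1 + s ^ 2))) s := by
    simpa [mul_comm, mul_assoc, mul_left_comm] using hP.fun_pow 2
  have hQP2 : HasDerivAt (fun t => (q t * p t)^2)
      (2 * (q s * p s) * ((((-(a * s) * q s + (β₀ - (2 * a - 1) * u s) * p s +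
        2 * (1 + s ^ 2) * (q s) ^ 2 * p s / s) / (1 + s ^ 2))) * p s +
        q s * ((a * s * p s - (γ₀ + (2 * a + 1) * w s) * q s -
        2 * (1 + s ^ 2) * q s * (p s) ^ 2 / s) / (1 + s ^ 2)))) s := by
    simpa [mul_comm, mul_assoc, mul_left_comm] using hQP.fun_pow 2
  have hid : HasDerivAt (fun t : ℝ => t) 1 s := hasDerivAt_id s
  have hsq : HasDerivAt (fun t : ℝ => 1 + t^2) (2*s) s := by
    simpa using (hasDerivAt_pow 2 s).const_add (1:ℝ)
  have big := ((hW.fun_mul hU).fun_sub (hasDerivAt_const s (β₀*γ₀))).fun_add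
      (((hid.const_mul 2).fun_mul ((hW.fun_mul hQ2).fun_add (hU.fun_mul hP2)))) |>.fun_add
      ((hQP.const_mul (4*a))) |>.fun_add
      (((hsq.const_mul 4).fun_mul hQP2))
  refine big.congr_deriv ?_
  field_simp
  ring

theorem Ffun_const (a β₀ γ₀ : ℝ) (q p u w : ℝ → ℝ)
    (hd : ∀ s ∈ Set.Ioi (0 : ℝ), HasDerivAt (Ffun a β₀ γ₀ q p u w) 0 s) :
    ∀ x y : ℝ, 0 < x → x ≤ y → Ffun a β₀ γ₀ q p u w y = Ffun a β₀ γ₀ q p u w x := by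
  intro x y hx hxy
  have hcont : ContinuousOn (Ffun a β₀ γ₀ q p u w) (Icc x y) := fun t ht =>
    ((hd t (lt_of_lt_of_le hx ht.1)).continuousAt).continuousWithinAt
  have := constant_of_has_deriv_right_zero hcont (fun t ht =>
    ((hd t (lt_of_lt_of_le hx ht.1)).hasDerivWithinAt))
  exact this y (by simp [hxy])

set_option maxHeartbeats 1000000 in
private lemma aux_low (c K k t Q P W U : ℝ) (hne : c ≠ 0) (ht1 : 1 ≤ t) (hK1 : 1 ≤ K)
    (hWb : |W| ≤ K) (hUb : |U| ≤ K)
    (hk : k = if 0 < c then min (Real.sqrt (c/8)) (c/(8*K)) else (-c)/(4*K))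
    (hc2 : |2*t*(W*Q^2+U*P^2) + 4*(1+t^2)*(Q*P)^2 - c| ≤ |c|/2) :
    k/t ≤ Q^2 + P^2 := by
  have ht0 : (0:ℝ) < t := by linarith
  have hK0 : (0:ℝ) < K := by linarith
  have hXnn : (0:ℝ) ≤ Q^2 + P^2 := by positivity
  have hGnn : (0:ℝ) ≤ 4*(1+t^2)*(Q*P)^2 := by positivity
  have hmb : |W*Q^2+U*P^2| ≤ K*(Q^2+P^2) := by
    have h1 := abs_add_le (W*Q^2) (U*P^2)
    rw [abs_mul, abs_mul, abs_of_nonneg (sq_nonneg Q), abs_of_nonneg (sq_nonneg P)] at h1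
    nlinarith [mul_le_mul_of_nonneg_right hWb (sq_nonneg Q),
      mul_le_mul_of_nonneg_right hUb (sq_nonneg P)]
  rw [div_le_iff₀ ht0]
  rcases lt_trichotomy c 0 with hcneg | hzero | hcpos
  · have habs : |c| = -c := abs_of_neg hcneg
    rw [habs] at hc2
    have hh2le : 2*t*(W*Q^2+U*P^2) + 4*(1+t^2)*(Q*P)^2 ≤ c/2 := by
      have := (abs_le.mp hc2).2; linarith
    have hmle : 2*t*(W*Q^2+U*P^2) ≤ c/2 := by linarith
    have h5 : -(W*Q^2+U*P^2) ≤ K*(Q^2+P^2) := le_trans (neg_le_abs _) hmb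
    have hkval : k = (-c)/(4*K) := by rw [hk, if_neg (by linarith)]
    rw [hkval, div_le_iff₀ (by positivity : (0:ℝ) < 4*K)]
    nlinarith [mul_le_mul_of_nonneg_right h5 (by linarith : (0:ℝ) ≤ 4*t)]
  · exact absurd hzero hne
  · have habs : |c| = c := abs_of_pos hcpos
    rw [habs] at hc2
    have hh2ge : c/2 ≤ 2*t*(W*Q^2+U*P^2) + 4*(1+t^2)*(Q*P)^2 := by
      have := (abs_le.mp hc2).1; linarith
    have hkval : k = min (Real.sqrt (c/8)) (c/(8*K)) := by rw [hk, if_pos hcpos]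
    rcases le_or_gt (c/4) (2*t*(W*Q^2+U*P^2)) with hcase | hcase
    · have hk2 : k ≤ c/(8*K) := by rw [hkval]; exact min_le_right _ _
      have h5 : W*Q^2+U*P^2 ≤ K*(Q^2+P^2) := le_trans (le_abs_self _) hmb
      have h6 : k * (8*K) ≤ c := by
        rw [← le_div_iff₀ (by positivity : (0:ℝ) < 8*K)]; exact hk2
      have h7 : k * (8*K) ≤ (Q^2+P^2) * t * (8*K) := by
        nlinarith [mul_le_mul_of_nonneg_right h5 (by linarith : (0:ℝ) ≤ 8*t)]
      exact le_of_mul_le_mul_right h7 (by positivity)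
    · have hG : c/4 ≤ 4*(1+t^2)*(Q*P)^2 := by linarith
      have hksq : k ≤ Real.sqrt (c/8) := by rw [hkval]; exact min_le_left _ _
      have hk0 : 0 < k := by
        rw [hkval]
        exact lt_min (Real.sqrt_pos.mpr (by linarith)) (by positivity)
      have hk2 : k^2 ≤ c/8 := by
        have h6 : k^2 ≤ Real.sqrt (c/8)^2 := pow_le_pow_left₀ hk0.le hksq 2
        rwa [Real.sq_sqrt (by positivity : (0:ℝ) ≤ c/8)] at h6
      have htt : (1:ℝ) + t^2 ≤ 2*t^2 := by nlinarith
      have h9 : (1+t^2)*(Q*P)^2 ≤ 2*t^2*(Q*P)^2 :=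
        mul_le_mul_of_nonneg_right htt (sq_nonneg (Q*P))
      have hG2 : c/8 ≤ 4*t^2*(Q*P)^2 := by linarith
      have hX2 : 4*(Q*P)^2 ≤ (Q^2+P^2)^2 := by nlinarith [sq_nonneg (Q^2-P^2)]
      have h10 : 4*(Q*P)^2*t^2 ≤ (Q^2+P^2)^2*t^2 :=
        mul_le_mul_of_nonneg_right hX2 (sq_nonneg t)
      have h7 : k^2 ≤ ((Q^2+P^2)*t)^2 := by nlinarith [h10]
      have h8 : (0:ℝ) < k + (Q^2+P^2)*t := by
        have := mul_nonneg hXnn ht0.le; linarith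
      nlinarith [h7, h8]

set_option maxHeartbeats 1000000 in
theorem Ffun_zero (a β₀ γ₀ : ℝ) (q p u w : ℝ → ℝ)
    (hu : ∀ s ∈ Set.Ioi (0 : ℝ), HasDerivAt u (-2 * (q s) ^ 2) s)
    (hw : ∀ s ∈ Set.Ioi (0 : ℝ), HasDerivAt w (-2 * (p s) ^ 2) s)
    (hqc : ∀ s ∈ Set.Ioi (0 : ℝ), ContinuousAt q s)
    (hpc : ∀ s ∈ Set.Ioi (0 : ℝ), ContinuousAt p s)
    (hconst : ∀ x y : ℝ, 0 < x → x ≤ y → Ffun a β₀ γ₀ q p u w y = Ffun a β₀ γ₀ q p u w x)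
    (hq0 : Tendsto q atTop (nhds 0)) (hp0 : Tendsto p atTop (nhds 0))
    (hu0 : Tendsto u atTop (nhds 0)) (hw0 : Tendsto w atTop (nhds 0)) :
    ∀ s ∈ Set.Ioi (0 : ℝ), Ffun a β₀ γ₀ q p u w s = 0 := by
  intro s hs
  by_contra hne
  set c := Ffun a β₀ γ₀ q p u w s with hc
  have hs0 : (0:ℝ) < s := hs
  have hFc : ∀ t, s ≤ t → Ffun a β₀ γ₀ q p u w t = c := fun t ht => hconst s t hs0 ht
  clear_value c
  have hW0 : Tendsto (fun t => γ₀ + (2*a+1) * w t) atTop (nhds γ₀) := by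
    simpa using tendsto_const_nhds.add (hw0.const_mul (2*a+1))
  have hU0 : Tendsto (fun t => β₀ - (2*a-1) * u t) atTop (nhds β₀) := by
    simpa using tendsto_const_nhds.sub (hu0.const_mul (2*a-1))
  have hF0 : Tendsto (Ffun a β₀ γ₀ q p u w) atTop (nhds c) :=
    Tendsto.congr' (by filter_upwards [eventually_ge_atTop s] with t ht using (hFc t ht).symm)
      tendsto_const_nhds
  set m : ℝ → ℝ := fun t => (γ₀ + (2*a+1)*w t) * (q t)^2 + (β₀ - (2*a-1)*u t) * (p t)^2 with hm
  set h₂ : ℝ → ℝ := fun t => 2*t*(m t) + 4*(1+t^2)*(q t * p t)^2 with hh₂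
  have hmt : ∀ t, m t = (γ₀ + (2*a+1)*w t) * (q t)^2 + (β₀ - (2*a-1)*u t) * (p t)^2 :=
    fun t => by rw [hm]
  have hh2t : ∀ t, h₂ t = 2*t*(m t) + 4*(1+t^2)*(q t * p t)^2 := fun t => by rw [hh₂]
  have hh2eq : ∀ t, h₂ t = Ffun a β₀ γ₀ q p u w t
      - ((γ₀ + (2*a+1)*w t) * (β₀ - (2*a-1)*u t) - β₀*γ₀) - 4*a*(q t * p t) := by
    intro t; rw [hh2t t, hmt t]; simp only [Ffun]; ring
  clear_value m h₂
  have hh20 : Tendsto h₂ atTop (nhds c) := by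
    have h : Tendsto (fun t => Ffun a β₀ γ₀ q p u w t
        - ((γ₀ + (2*a+1)*w t) * (β₀ - (2*a-1)*u t) - β₀*γ₀) - 4*a*(q t * p t)) atTop
        (nhds (c - (γ₀*β₀ - β₀*γ₀) - 4*a*(0*0))) :=
      (hF0.sub ((hW0.mul hU0).sub (tendsto_const_nhds (x := β₀*γ₀)))).sub
        ((hq0.mul hp0).const_mul (4*a))
    have h2 : c - (γ₀*β₀ - β₀*γ₀) - 4*a*(0*0) = c := by ring
    rw [h2] at h
    exact Tendsto.congr (fun t => (hh2eq t).symm) h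
  set K : ℝ := max (max (|γ₀|+1) (|β₀|+1)) 1 with hK
  have hK1 : (1:ℝ) ≤ K := le_max_right _ _
  have hK0 : (0:ℝ) < K := lt_of_lt_of_le one_pos hK1
  clear_value K
  set k : ℝ := if 0 < c then min (Real.sqrt (c/8)) (c/(8*K)) else (-c)/(4*K) with hk
  have hk0 : 0 < k := by
    rcases lt_trichotomy c 0 with h | h | h
    · rw [hk, if_neg (by linarith)]
      apply div_pos (by linarith) (by positivity)
    · exact absurd h hne
    · rw [hk, if_pos h]
      exact lt_min (Real.sqrt_pos.mpr (by linarith)) (by positivity)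
  clear_value k
  obtain ⟨N₁, hN₁⟩ := Metric.tendsto_atTop.mp hW0 1 one_pos
  obtain ⟨N₂, hN₂⟩ := Metric.tendsto_atTop.mp hU0 1 one_pos
  obtain ⟨N₃, hN₃⟩ := Metric.tendsto_atTop.mp hh20 (|c|/2) (by positivity)
  set s₁ : ℝ := max (max s 1) (max N₁ (max N₂ N₃)) with hs₁
  have hs₁s : s ≤ s₁ := le_trans (le_max_left _ _) (le_max_left _ _)
  have hs₁1 : (1:ℝ) ≤ s₁ := le_trans (le_max_right s 1) (le_max_left _ _)
  have hs₁0 : (0:ℝ) < s₁ := lt_of_lt_of_le one_pos hs₁1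
  have hs₁N₁ : N₁ ≤ s₁ := le_trans (le_max_left _ _) (le_max_right (max s 1) _)
  have hs₁N₂ : N₂ ≤ s₁ := le_trans (le_trans (le_max_left N₂ N₃) (le_max_right N₁ _))
    (le_max_right (max s 1) _)
  have hs₁N₃ : N₃ ≤ s₁ := le_trans (le_trans (le_max_right N₂ N₃) (le_max_right N₁ _))
    (le_max_right (max s 1) _)
  clear_value s₁
  -- pointwise lower bound
  have hlow : ∀ t, s₁ ≤ t → k/t ≤ (q t)^2 + (p t)^2 := by
    intro t ht
    have ht1 : (1:ℝ) ≤ t := le_trans hs₁1 ht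
    have ht0 : (0:ℝ) < t := lt_of_lt_of_le one_pos ht1
    have hWb : |γ₀ + (2*a+1)*w t| ≤ K := by
      have h1 := hN₁ t (le_trans hs₁N₁ ht)
      rw [Real.dist_eq] at h1
      have h2 : |γ₀ + (2*a+1)*w t| - |γ₀| ≤ |γ₀ + (2*a+1)*w t - γ₀| :=
        abs_sub_abs_le_abs_sub _ _
      calc |γ₀ + (2*a+1)*w t| ≤ |γ₀| + 1 := by linarith
        _ ≤ K := by rw [hK]; exact le_trans (le_max_left _ _) (le_max_left _ _)
    have hUb : |β₀ - (2*a-1)*u t| ≤ K := by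
      have h1 := hN₂ t (le_trans hs₁N₂ ht)
      rw [Real.dist_eq] at h1
      have h2 : |β₀ - (2*a-1)*u t| - |β₀| ≤ |β₀ - (2*a-1)*u t - β₀| :=
        abs_sub_abs_le_abs_sub _ _
      calc |β₀ - (2*a-1)*u t| ≤ |β₀| + 1 := by linarith
        _ ≤ K := by rw [hK]; exact le_trans (le_max_right _ _) (le_max_left _ _)
    have hc2 : |h₂ t - c| ≤ |c|/2 := by
      have h1 := hN₃ t (le_trans hs₁N₃ ht)
      rw [Real.dist_eq] at h1; exact h1.le
    have hc2' : |2*t*((γ₀ + (2*a+1)*w t)*(q t)^2+(β₀ - (2*a-1)*u t)*(p t)^2)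
        + 4*(1+t^2)*(q t * p t)^2 - c| ≤ |c|/2 := by
      rw [hh2t t, hmt t] at hc2
      exact hc2
    exact aux_low c K k t (q t) (p t) _ _ hne ht1 hK1 hWb hUb hk hc2'
  -- FTC
  have hgint : ∀ T, s₁ ≤ T → (∫ t in s₁..T, ((q t)^2 + (p t)^2))
      = (u s₁ + w s₁)/2 - (u T + w T)/2 := by
    intro T hT
    have huIcc : Set.uIcc s₁ T = Set.Icc s₁ T := Set.uIcc_of_le hT
    have hsub : Set.uIcc s₁ T ⊆ Set.Ioi (0:ℝ) := by
      rw [huIcc]; intro x hx; exact lt_of_lt_of_le hs₁0 hx.1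
    have hderiv : ∀ t ∈ Set.uIcc s₁ T,
        HasDerivAt (fun t => (u t + w t)/(-2)) ((q t)^2 + (p t)^2) t := by
      intro t htm
      have h1 := ((hu t (hsub htm)).fun_add (hw t (hsub htm))).div_const (-2)
      refine h1.congr_deriv ?_
      ring
    have hcont : ContinuousOn (fun t => (q t)^2 + (p t)^2) (Set.uIcc s₁ T) := fun x hx =>
      (((hqc x (hsub hx)).pow 2).add ((hpc x (hsub hx)).pow 2)).continuousWithinAt
    rw [intervalIntegral.integral_eq_sub_of_hasDerivAt hderiv hcont.intervalIntegrable]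
    ring
  -- lower bound on the integral
  have hlb : ∀ T, s₁ ≤ T → k * (Real.log T - Real.log s₁)
      ≤ ∫ t in s₁..T, ((q t)^2 + (p t)^2) := by
    intro T hT
    have hT0 : (0:ℝ) < T := lt_of_lt_of_le hs₁0 hT
    have huIcc : Set.uIcc s₁ T = Set.Icc s₁ T := Set.uIcc_of_le hT
    have hsub : Set.uIcc s₁ T ⊆ Set.Ioi (0:ℝ) := by
      rw [huIcc]; intro x hx; exact lt_of_lt_of_le hs₁0 hx.1
    have h1 : (∫ t in s₁..T, k * (1/t)) = k * (Real.log T - Real.log s₁) := by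
      rw [intervalIntegral.integral_const_mul, integral_one_div_of_pos hs₁0 hT0,
        Real.log_div (ne_of_gt hT0) (ne_of_gt hs₁0)]
    rw [← h1]
    apply intervalIntegral.integral_mono_on hT
    · apply ContinuousOn.intervalIntegrable
      apply ContinuousOn.mul continuousOn_const
      apply ContinuousOn.div continuousOn_const continuousOn_id
      intro x hx
      exact ne_of_gt (hsub hx)
    · exact (ContinuousOn.intervalIntegrable (fun x hx =>
        (((hqc x (hsub hx)).pow 2).add ((hpc x (hsub hx)).pow 2)).continuousWithinAt))
    · intro x hx
      calc k * (1/x) = k/x := by ring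
        _ ≤ _ := hlow x hx.1
  -- choose a large T and derive a contradiction
  obtain ⟨M₁, hM₁⟩ := Metric.tendsto_atTop.mp hu0 1 one_pos
  obtain ⟨M₂, hM₂⟩ := Metric.tendsto_atTop.mp hw0 1 one_pos
  set B : ℝ := (u s₁ + w s₁)/2 + 1 with hB
  clear_value B
  obtain ⟨T, hT1, hT2⟩ := ((Real.tendsto_log_atTop.eventually_gt_atTop
    (Real.log s₁ + (B+1)/k)).and (eventually_ge_atTop (max s₁ (max M₁ M₂)))).exists
  have hTs₁ : s₁ ≤ T := le_trans (le_max_left _ _) hT2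
  have hTu : |u T| ≤ 1 := by
    have := hM₁ T (le_trans (le_trans (le_max_left M₁ M₂) (le_max_right s₁ _)) hT2)
    rw [Real.dist_eq, sub_zero] at this; exact this.le
  have hTw : |w T| ≤ 1 := by
    have := hM₂ T (le_trans (le_trans (le_max_right M₁ M₂) (le_max_right s₁ _)) hT2)
    rw [Real.dist_eq, sub_zero] at this; exact this.le
  have h1 := hlb T hTs₁
  rw [hgint T hTs₁] at h1
  have h4 : (B+1)/k < Real.log T - Real.log s₁ := by linarith [hT1]
  have h2 : B + 1 < k * (Real.log T - Real.log s₁) := by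
    have h5 := (div_lt_iff₀ hk0).mp h4
    linarith [h5]
  have h3 : (u s₁ + w s₁)/2 - (u T + w T)/2 ≤ B := by
    have hu1 := abs_le.mp hTu
    have hw1 := abs_le.mp hTw
    rw [hB]; linarith
  linarith [h1, h2, h3]

/-- Integral of motion
`[γ₀+(2a+1)w][β₀-(2a-1)u] = β₀γ₀ - 2sσ - 4a(1+s²)qp`, `σ := (1+s²)R`,
for the Tracy–Widom coupled system of the Cauchy unitary ensemble on the symmetric
double interval `(-∞,-s) ∪ (s,∞)`. -/
theorem stmt15 (a β₀ γ₀ : ℝ) (ha : 1 / 2 < a)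
    (q p u w R R₀ : ℝ → ℝ)
    (hu : ∀ s ∈ Set.Ioi (0 : ℝ), HasDerivAt u (-2 * (q s) ^ 2) s)
    (hw : ∀ s ∈ Set.Ioi (0 : ℝ), HasDerivAt w (-2 * (p s) ^ 2) s)
    (hq : ∀ s ∈ Set.Ioi (0 : ℝ), HasDerivAt q
      ((-(a * s) * q s + (β₀ - (2 * a - 1) * u s) * p s +
        2 * (1 + s ^ 2) * (q s) ^ 2 * p s / s) / (1 + s ^ 2)) s)
    (hp : ∀ s ∈ Set.Ioi (0 : ℝ), HasDerivAt p
      ((a * s * p s - (γ₀ + (2 * a + 1) * w s) * q s -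
        2 * (1 + s ^ 2) * q s * (p s) ^ 2 / s) / (1 + s ^ 2)) s)
    (hR : ∀ s ∈ Set.Ioi (0 : ℝ), (1 + s ^ 2) * R s =
      (γ₀ + (2 * a + 1) * w s) * (q s) ^ 2 + (β₀ - (2 * a - 1) * u s) * (p s) ^ 2 -
        2 * a * s * (q s * p s) + 2 * s * (1 + s ^ 2) * (R₀ s) ^ 2)
    (hR₀ : ∀ s ∈ Set.Ioi (0 : ℝ), R₀ s = q s * p s / s)
    (hq0 : Tendsto q atTop (nhds 0)) (hp0 : Tendsto p atTop (nhds 0))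
    (hu0 : Tendsto u atTop (nhds 0)) (hw0 : Tendsto w atTop (nhds 0))
    (hσ0 : Tendsto (fun s => (1 + s ^ 2) * R s) atTop (nhds 0)) :
    ∀ s ∈ Set.Ioi (0 : ℝ),
      (γ₀ + (2 * a + 1) * w s) * (β₀ - (2 * a - 1) * u s) =
        β₀ * γ₀ - 2 * s * ((1 + s ^ 2) * R s) - 4 * a * (1 + s ^ 2) * (q s * p s) := by
  have hd := Ffun_deriv a β₀ γ₀ q p u w hu hw hq hp
  have hconst := Ffun_const a β₀ γ₀ q p u w hd
  have hqc : ∀ s ∈ Set.Ioi (0:ℝ), ContinuousAt q s := fun s hs => (hq s hs).continuousAt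
  have hpc : ∀ s ∈ Set.Ioi (0:ℝ), ContinuousAt p s := fun s hs => (hp s hs).continuousAt
  have hzero := Ffun_zero a β₀ γ₀ q p u w hu hw hqc hpc hconst hq0 hp0 hu0 hw0
  intro s hs
  have hF := hzero s hs
  have hsne : s ≠ 0 := ne_of_gt (show (0:ℝ) < s from hs)
  rw [hR s hs, hR₀ s hs]
  simp only [Ffun] at hF
  field_simp
  linear_combination hF
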